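/- For every C ∈ ℤ[i]⁵ there exists exactly one vector r ∈ ℤ[i]⁵ such that all entries of r are real (imaginary part zero), the first entry r₀ equals 0 or 3, each of the remaining four entries equals 0, 1, or 2, and C − r lies in the ℤ[i]-span of the columns of K̄. In other words, these 162 configurations form a complete set of representatives for the firing equivalence classes of chip configurations on R₁₀. -/

import Mathlib

open Matrix

/-- The 5×5 integer matrix `D` with `D j k = 1` if `j = k`, `-1` if `j - k ≡ ±1 (mod 5)`,
and `0` otherwise. -/
def Dmat : Matrix (Fin 5) (Fin 5) ℤ := fun j k =>
  if j = k then 1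
  else if (j : ZMod 5) - (k : ZMod 5) = 1 ∨ (j : ZMod 5) - (k : ZMod 5) = -1 then -1
  else 0

/-- The Gaussian integer `i`. -/
def gi : GaussianInt := ⟨0, 1⟩

/-- `K̄ = I₅ + i • D`, a symmetric 5×5 matrix over the Gaussian integers:
`1 + i` on the diagonal, `-i` in positions with `j - k ≡ ±1 (mod 5)`, `0` elsewhere. -/
noncomputable def Kbar : Matrix (Fin 5) (Fin 5) GaussianInt :=
  1 + gi • (Dmat.map (Int.cast : ℤ → GaussianInt))

/- Auxiliary machinery -/

def gg (a b : ℤ) : GaussianInt := ⟨a, b⟩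
@[simp] lemma gg_re (a b : ℤ) : (gg a b).re = a := rfl
@[simp] lemma gg_im (a b : ℤ) : (gg a b).im = b := rfl

def KbarM : Matrix (Fin 5) (Fin 5) GaussianInt :=
  !![gg 1 1, gg 0 (-1), 0, 0, gg 0 (-1);
     gg 0 (-1), gg 1 1, gg 0 (-1), 0, 0;
     0, gg 0 (-1), gg 1 1, gg 0 (-1), 0;
     0, 0, gg 0 (-1), gg 1 1, gg 0 (-1);
     gg 0 (-1), 0, 0, gg 0 (-1), gg 1 1]

lemma Kbar_eq : Kbar = KbarM := by
  ext j k
  all_goals (fin_cases j <;> fin_cases k <;> decide)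

def p4 : Fin 5 → GaussianInt := ![gg (-4) 0, gg (-1) (-2), gg 1 (-1), gg 1 0, 0]
def p5 : Fin 5 → GaussianInt := ![gg 1 (-2), gg 1 0, gg 0 1, gg 0 1, gg 1 0]
def g4 : Fin 5 → GaussianInt := ![gg (-2) (-1), 0, 0, 0, gg 0 1]
def g5 : Fin 5 → GaussianInt := ![gg 1 0, 0, 0, 0, 0]
def w4 : Fin 5 → GaussianInt := ![0, gg 0 1, gg 1 1, gg 2 (-1), gg 0 (-1)]
def w5 : Fin 5 → GaussianInt := ![gg 1 0, gg 0 1, gg 0 1, gg 1 0, gg 1 (-2)]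
def Mmat : Matrix (Fin 5) (Fin 5) GaussianInt :=
  !![0, 0, 0, 0, 0;
     gg 0 1, 0, 0, 0, 0;
     gg 1 1, gg 0 1, 0, 0, 0;
     gg 2 (-1), gg 1 1, gg 0 1, 0, 0;
     0, 0, 0, 0, 0]

lemma hKp4 (y : Fin 5 → GaussianInt) : p4 ⬝ᵥ Kbar.mulVec y = gg 3 0 * (g4 ⬝ᵥ y) := by
  rw [Kbar_eq]
  simp [p4, g4, KbarM, Matrix.mulVec, dotProduct, Fin.sum_univ_five,
    Matrix.vecHead, Matrix.vecTail, Zsqrtd.ext_iff,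
    Zsqrtd.re_mul, Zsqrtd.im_mul, Zsqrtd.re_add, Zsqrtd.im_add]
  constructor <;> ring

lemma hKp5 (y : Fin 5 → GaussianInt) : p5 ⬝ᵥ Kbar.mulVec y = gg 3 (-3) * (g5 ⬝ᵥ y) := by
  rw [Kbar_eq]
  simp [p5, g5, KbarM, Matrix.mulVec, dotProduct, Fin.sum_univ_five,
    Matrix.vecHead, Matrix.vecTail, Zsqrtd.ext_iff,
    Zsqrtd.re_mul, Zsqrtd.im_mul, Zsqrtd.re_add, Zsqrtd.im_add]
  constructor <;> ring

lemma solve9 (x : Fin 5 → GaussianInt) (t4 t5 : GaussianInt)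
    (h4 : p4 ⬝ᵥ x = gg 3 0 * t4) (h5 : p5 ⬝ᵥ x = gg 3 (-3) * t5) :
    Kbar.mulVec (fun j => Mmat.mulVec x j + t4 * w4 j + t5 * w5 j) = x := by
  rw [Kbar_eq]
  simp only [p4, p5, dotProduct, Fin.sum_univ_five, Zsqrtd.ext_iff,
    Zsqrtd.re_mul, Zsqrtd.im_mul, Zsqrtd.re_add, Zsqrtd.im_add, gg_re, gg_im,
    Matrix.cons_val_zero, Matrix.cons_val_one, Matrix.head_cons,
    Matrix.cons_val_two, Matrix.cons_val_three, Matrix.cons_val_four,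
    Matrix.tail_cons, Zsqrtd.re_zero, Zsqrtd.im_zero] at h4 h5
  funext j
  fin_cases j <;>
    (simp [KbarM, Mmat, w4, w5, Matrix.mulVec, dotProduct, Fin.sum_univ_five,
      Matrix.vecHead, Matrix.vecTail, Zsqrtd.ext_iff,
      Zsqrtd.re_mul, Zsqrtd.im_mul, Zsqrtd.re_add, Zsqrtd.im_add]) <;> omega

lemma dvd3_iff (z : GaussianInt) : gg 3 0 ∣ z ↔ (3:ℤ) ∣ z.re ∧ (3:ℤ) ∣ z.im := by
  constructor
  · rintro ⟨w, rfl⟩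
    exact ⟨⟨w.re, by simp [Zsqrtd.re_mul]⟩, ⟨w.im, by simp [Zsqrtd.im_mul]⟩⟩
  · rintro ⟨⟨A, hA⟩, ⟨B, hB⟩⟩
    exact ⟨gg A B, by rw [Zsqrtd.ext_iff]; simp [Zsqrtd.re_mul, Zsqrtd.im_mul]; omega⟩

lemma dvd33_iff (z : GaussianInt) :
    gg 3 (-3) ∣ z ↔ (3:ℤ) ∣ z.re ∧ (3:ℤ) ∣ z.im ∧ (2:ℤ) ∣ (z.re + z.im) := by
  constructor
  · rintro ⟨w, rfl⟩
    refine ⟨⟨w.re + w.im, by simp [Zsqrtd.re_mul]; ring⟩,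
      ⟨w.im - w.re, by simp [Zsqrtd.im_mul]; ring⟩,
      ⟨3 * w.im, by simp [Zsqrtd.re_mul, Zsqrtd.im_mul]; ring⟩⟩
  · rintro ⟨⟨A, hA⟩, ⟨B, hB⟩, hC⟩
    obtain ⟨k, hk⟩ : (2:ℤ) ∣ (A + B) := by omega
    exact ⟨gg (A - k) k, by rw [Zsqrtd.ext_iff]; simp [Zsqrtd.re_mul, Zsqrtd.im_mul]; omega⟩

lemma zmod_sub (n : ℕ) [NeZero n] (a b : ℤ) :
    ((a : ZMod n) = (b : ZMod n)) ↔ (n:ℤ) ∣ (a - b) := by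
  rw [ZMod.intCast_eq_intCast_iff, Int.modEq_iff_dvd, dvd_sub_comm]

lemma mem_iff9 (x : Fin 5 → GaussianInt) :
    x ∈ LinearMap.range Kbar.mulVecLin ↔ (gg 3 0 ∣ p4 ⬝ᵥ x ∧ gg 3 (-3) ∣ p5 ⬝ᵥ x) := by
  constructor
  · rintro ⟨y, rfl⟩
    simp only [Matrix.mulVecLin_apply]
    exact ⟨⟨g4 ⬝ᵥ y, hKp4 y⟩, ⟨g5 ⬝ᵥ y, hKp5 y⟩⟩
  · rintro ⟨⟨t4, h4⟩, ⟨t5, h5⟩⟩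
    exact ⟨fun j => Mmat.mulVec x j + t4 * w4 j + t5 * w5 j,
      by simp only [Matrix.mulVecLin_apply]; exact solve9 x t4 t5 h4 h5⟩

abbrev T9 := ZMod 3 × ZMod 3 × ZMod 3 × ZMod 3 × ZMod 2

def phi9 (x : Fin 5 → GaussianInt) : T9 :=
  (((p4 ⬝ᵥ x).re : ZMod 3), ((p4 ⬝ᵥ x).im : ZMod 3),
   ((p5 ⬝ᵥ x).re : ZMod 3), ((p5 ⬝ᵥ x).im : ZMod 3),
   (((p5 ⬝ᵥ x).re + (p5 ⬝ᵥ x).im : ℤ) : ZMod 2))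

lemma phi_eq_iff (x y : Fin 5 → GaussianInt) :
    phi9 x = phi9 y ↔ (gg 3 0 ∣ p4 ⬝ᵥ (x - y) ∧ gg 3 (-3) ∣ p5 ⬝ᵥ (x - y)) := by
  have e4 : p4 ⬝ᵥ (x - y) = p4 ⬝ᵥ x - p4 ⬝ᵥ y := dotProduct_sub p4 x y
  have e5 : p5 ⬝ᵥ (x - y) = p5 ⬝ᵥ x - p5 ⬝ᵥ y := dotProduct_sub p5 x y
  rw [e4, e5, dvd3_iff, dvd33_iff]
  simp only [phi9, Prod.mk.injEq, zmod_sub, Zsqrtd.re_sub, Zsqrtd.im_sub]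
  constructor
  · rintro ⟨a, b, c, d, e⟩
    refine ⟨⟨?_, ?_⟩, ?_, ?_, ?_⟩ <;> omega
  · rintro ⟨⟨a, b⟩, c, d, e⟩
    refine ⟨?_, ?_, ?_, ?_, ?_⟩ <;> omega

abbrev Q9 := Fin 2 × Fin 3 × Fin 3 × Fin 3 × Fin 3

def vec9 (q : Q9) : Fin 5 → GaussianInt :=
  ![gg (3 * q.1.val) 0, gg q.2.1.val 0, gg q.2.2.1.val 0, gg q.2.2.2.1.val 0,
    gg q.2.2.2.2.val 0]

def F9 (q : Q9) : T9 := phi9 (vec9 q)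

set_option maxRecDepth 1000000 in
set_option maxHeartbeats 4000000 in
lemma F9_inj : Function.Injective F9 := by decide

lemma F9_bij : Function.Bijective F9 := by
  rw [Fintype.bijective_iff_injective_and_card]
  refine ⟨F9_inj, ?_⟩
  simp [Fintype.card_prod]

lemma exists_q (r : Fin 5 → GaussianInt) (him : ∀ j, (r j).im = 0)
    (h0 : (r 0).re = 0 ∨ (r 0).re = 3)
    (hrest : ∀ j, j ≠ 0 → ((r j).re = 0 ∨ (r j).re = 1 ∨ (r j).re = 2)) :
    ∃ q : Q9, r = vec9 q := by
  have h1 := hrest 1 (by decide)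
  have h2 := hrest 2 (by decide)
  have h3 := hrest 3 (by decide)
  have h4 := hrest 4 (by decide)
  have i0 := him 0; have i1 := him 1; have i2 := him 2
  have i3 := him 3; have i4 := him 4
  refine ⟨⟨⟨(r 0).re.toNat / 3, by omega⟩, ⟨(r 1).re.toNat, by omega⟩,
    ⟨(r 2).re.toNat, by omega⟩, ⟨(r 3).re.toNat, by omega⟩, ⟨(r 4).re.toNat, by omega⟩⟩, ?_⟩
  funext j
  rw [Zsqrtd.ext_iff]
  fin_cases j <;> simp [vec9] <;> omega

/-- every `C ∈ ℤ[i]⁵` is firing equivalent to exactly one configuration `r`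
whose entries are all real, with `r 0 ∈ {0, 3}` and `r j ∈ {0, 1, 2}` for `j ≠ 0`. -/
theorem stmt_9 (C : Fin 5 → GaussianInt) :
    ∃! r : Fin 5 → GaussianInt,
      (∀ j, (r j).im = 0) ∧
      ((r 0).re = 0 ∨ (r 0).re = 3) ∧
      (∀ j, j ≠ 0 → ((r j).re = 0 ∨ (r j).re = 1 ∨ (r j).re = 2)) ∧
      C - r ∈ LinearMap.range Kbar.mulVecLin := by
  obtain ⟨q, hq⟩ := F9_bij.2 (phi9 C)
  have hmemq : C - vec9 q ∈ LinearMap.range Kbar.mulVecLin := by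
    rw [mem_iff9]
    exact (phi_eq_iff C (vec9 q)).mp hq.symm
  refine ⟨vec9 q, ⟨?_, ?_, ?_, hmemq⟩, ?_⟩
  · intro j; fin_cases j <;> simp [vec9]
  · have := q.1.isLt
    simp only [vec9, Matrix.cons_val_zero, gg_re]
    omega
  · intro j hj
    fin_cases j
    · exact absurd rfl hj
    · have := q.2.1.isLt; simp [vec9]; omega
    · have := q.2.2.1.isLt; simp [vec9]; omega
    · have := q.2.2.2.1.isLt; simp [vec9]; omega
    · have := q.2.2.2.2.isLt; simp [vec9]; omega
  · rintro r ⟨him, h0, hrest, hmem⟩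
    obtain ⟨q', rfl⟩ := exists_q r him h0 hrest
    have hsub : vec9 q' - vec9 q ∈ LinearMap.range Kbar.mulVecLin := by
      have h := Submodule.sub_mem _ hmem hmemq
      have e : (C - vec9 q') - (C - vec9 q) = -(vec9 q' - vec9 q) := by abel
      rw [e] at h
      simpa using Submodule.neg_mem _ h
    have : F9 q' = F9 q :=
      (phi_eq_iff (vec9 q') (vec9 q)).mpr ((mem_iff9 _).mp hsub)
    exact congrArg vec9 (F9_inj this)
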